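/- Let l ≥ 1, η ≥ 1 be integers and x_1, …, x_{η+l} elements of a commutative ring. Then the determinant of the generalized Vandermonde matrix with rows (x_1^{e}, …, x_{η+l}^{e}) for exponents e ∈ {0, 1, 2, …, l−1, l+1, …, η+l} equals σ_{η+l,η}(x_1,…,x_{η+l}) times the ordinary Vandermonde determinant Π_{i<j}(x_j − x_i). -/

import Mathlib

open Finset Matrix

private lemma Ioi_castSucc_eq' {n : ℕ} (i : Fin n) :
    Finset.Ioi (Fin.castSucc i) =
      insert (Fin.last n) ((Finset.Ioi i).map Fin.castSuccOrderEmb.toEmbedding) := by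
  ext j
  simp only [Finset.mem_Ioi, Finset.mem_insert, Finset.mem_map,
    RelEmbedding.coe_toEmbedding, Fin.castSuccOrderEmb, OrderEmbedding.coe_ofStrictMono]
  constructor
  · intro hj
    by_cases h : (j : ℕ) = n
    · left; exact Fin.ext (by simpa using h)
    · right
      refine ⟨⟨(j : ℕ), by omega⟩, ?_, ?_⟩
      · rw [Fin.lt_def] at hj ⊢; simpa using hj
      · ext; simp
  · rintro (rfl | ⟨j', hj', rfl⟩)
    · exact Fin.castSucc_lt_last i
    · rw [Fin.lt_def] at hj' ⊢; simpa using hj'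

open Polynomial in
private lemma det_vandermonde_snoc {R : Type*} [CommRing R] {n : ℕ} (x : Fin n → R) :
    (Matrix.vandermonde (Fin.snoc (fun i => (C (x i) : R[X])) X)).det =
      C (Matrix.vandermonde x).det * ∏ i : Fin n, (X - C (x i)) := by
  rw [Matrix.det_vandermonde, Matrix.det_vandermonde]
  rw [Fin.prod_univ_castSucc]
  have hlast : Finset.Ioi (Fin.last n) = (∅ : Finset (Fin (n + 1))) := by
    ext j
    simp only [Finset.mem_Ioi, Finset.notMem_empty, iff_false, not_lt]
    exact Fin.le_last j
  rw [hlast, Finset.prod_empty, mul_one]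
  have hstep : ∀ i : Fin n,
      (∏ j ∈ Finset.Ioi (Fin.castSucc i),
        ((Fin.snoc (fun k => (C (x k) : R[X])) X : Fin (n+1) → R[X]) j -
         (Fin.snoc (fun k => (C (x k) : R[X])) X : Fin (n+1) → R[X]) (Fin.castSucc i))) =
      (X - C (x i)) * ∏ j ∈ Finset.Ioi i, (C (x j) - C (x i)) := by
    intro i
    rw [Ioi_castSucc_eq' i, Finset.prod_insert, Finset.prod_map]
    · simp [Fin.snoc_last, Fin.snoc_castSucc, Fin.castSuccOrderEmb]
    · simp only [Finset.mem_map, not_exists, not_and]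
      intro j' _ h
      exact (Fin.castSucc_lt_last j').ne
        (by simpa [Fin.castSuccOrderEmb] using h)
  simp only [hstep]
  rw [Finset.prod_mul_distrib]
  simp only [← map_sub, ← map_prod]
  ring

open Polynomial in
private lemma det_genVandermonde_aux {R : Type*} [CommRing R] (n l : ℕ) (hl : l ≤ n)
    (x : Fin n → R) :
    (Matrix.of fun i j : Fin n =>
        x j ^ (if (i : ℕ) < l then (i : ℕ) else (i : ℕ) + 1)).det =
      (∑ S ∈ (Finset.univ : Finset (Fin n)).powersetCard (n - l), ∏ j ∈ S, x j) *
        (Matrix.vandermonde x).det := by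
  have hln : l < n + 1 := by omega
  set j₀ : Fin (n + 1) := ⟨l, hln⟩ with hj₀
  set y : Fin (n + 1) → R[X] := Fin.snoc (fun i => C (x i)) X with hy
  set d : R := (Matrix.vandermonde x).det with hd
  set e : R := ∑ S ∈ (Finset.univ : Finset (Fin n)).powersetCard (n - l), ∏ j ∈ S, x j with he
  set M : Fin (n + 1) → Matrix (Fin n) (Fin n) R :=
    fun j => Matrix.of fun a b => x a ^ ((j.succAbove b : ℕ)) with hM
  have hminor : ∀ j : Fin (n + 1),
      ((Matrix.vandermonde y).submatrix (Fin.last n).succAbove j.succAbove).det =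
        C ((M j).det) := by
    intro j
    have h1 : (Matrix.vandermonde y).submatrix (Fin.last n).succAbove j.succAbove =
        (C : R →+* R[X]).mapMatrix (M j) := by
      ext a b
      simp [hy, hM, Matrix.vandermonde, Fin.succAbove_last, Fin.snoc_castSucc, map_pow]
    rw [h1]
    exact (RingHom.map_det _ _).symm
  have hexp : (Matrix.vandermonde y).det =
      ∑ j : Fin (n + 1), C ((-1) ^ (n + (j : ℕ)) * (M j).det) * X ^ (j : ℕ) := by
    rw [Matrix.det_succ_row _ (Fin.last n)]
    refine Finset.sum_congr rfl fun j _ => ?_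
    rw [hminor j]
    have hA : Matrix.vandermonde y (Fin.last n) j = X ^ (j : ℕ) := by
      simp [Matrix.vandermonde, hy, Fin.snoc_last]
    rw [hA, Fin.val_last, _root_.map_mul, map_pow, map_neg, _root_.map_one]
    ring
  have hco1 : ((Matrix.vandermonde y).det).coeff l = (-1) ^ (n + l) * (M j₀).det := by
    rw [hexp, Polynomial.finset_sum_coeff]
    rw [Finset.sum_eq_single j₀]
    · rw [Polynomial.coeff_C_mul, Polynomial.coeff_X_pow, if_pos rfl, mul_one]
    · intro j _ hj
      have hne : l ≠ (j : ℕ) := fun h => hj (Fin.ext h.symm)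
      rw [Polynomial.coeff_C_mul, Polynomial.coeff_X_pow, if_neg hne, mul_zero]
    · intro h; exact absurd (Finset.mem_univ j₀) h
  have hprodm : (∏ i : Fin n, (X - C (x i)) : R[X]) =
      (Multiset.map (fun t => X - C t) ((Finset.univ : Finset (Fin n)).val.map x)).prod := by
    rw [Multiset.map_map]
    rfl
  have hcard : Multiset.card ((Finset.univ : Finset (Fin n)).val.map x) = n := by simp
  have hco2 : ((Matrix.vandermonde y).det).coeff l = d * ((-1) ^ (n - l) * e) := by
    rw [det_vandermonde_snoc x, Polynomial.coeff_C_mul, hprodm,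
      Multiset.prod_X_sub_C_coeff _ (by rw [hcard]; omega), hcard]
    rw [Finset.esymm_map_val]
  have hsign : ((-1 : R) ^ (n + l)) = (-1 : R) ^ (n - l) := by
    rw [show n + l = (n - l) + 2 * l by omega, pow_add, pow_mul]
    norm_num
  have hE : (-1 : R) ^ (n - l) * (M j₀).det = d * ((-1) ^ (n - l) * e) := by
    conv_lhs => rw [← hsign, ← hco1]
    exact hco2
  have hsq : (-1 : R) ^ (n - l) * (-1 : R) ^ (n - l) = 1 := by
    rw [← pow_add, show (n - l) + (n - l) = 2 * (n - l) by omega, pow_mul]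
    norm_num
  have hgoal : (M j₀).det = e * d := by
    calc (M j₀).det = ((-1 : R) ^ (n - l) * (-1 : R) ^ (n - l)) * (M j₀).det := by
          rw [hsq, one_mul]
      _ = (-1 : R) ^ (n - l) * ((-1 : R) ^ (n - l) * (M j₀).det) := by ring
      _ = (-1 : R) ^ (n - l) * (d * ((-1) ^ (n - l) * e)) := by rw [hE]
      _ = ((-1 : R) ^ (n - l) * (-1 : R) ^ (n - l)) * (e * d) := by ring
      _ = e * d := by rw [hsq, one_mul]
  have hsa : ∀ i : Fin n, ((j₀.succAbove i : ℕ)) =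
      if (i : ℕ) < l then (i : ℕ) else (i : ℕ) + 1 := by
    intro i
    rcases lt_or_ge (i : ℕ) l with h | h
    · rw [Fin.succAbove_of_castSucc_lt _ _ (by rw [Fin.lt_def]; simpa using h)]
      simp [h]
    · rw [Fin.succAbove_of_le_castSucc _ _ (by rw [Fin.le_def]; simpa using h)]
      simp [Fin.val_succ, not_lt.2 h]
  have hMT : (Matrix.of fun i j : Fin n =>
      x j ^ (if (i : ℕ) < l then (i : ℕ) else (i : ℕ) + 1)) = (M j₀)ᵀ := by
    ext i j
    simp only [Matrix.of_apply, Matrix.transpose_apply, hM, hsa i]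
  rw [hMT, Matrix.det_transpose]
  exact hgoal

/-- The generalized Vandermonde determinant with exponents
`{0, 1, …, η+l} \ {l}` equals `σ_{η+l,η}(x)` times the ordinary Vandermonde
determinant. -/
theorem det_generalizedVandermonde (η l : ℕ) (hη : 1 ≤ η) (hl : 1 ≤ l)
    {R : Type*} [CommRing R] (x : Fin (η + l) → R) :
    (Matrix.of fun i j : Fin (η + l) =>
        x j ^ (if (i : ℕ) < l then (i : ℕ) else (i : ℕ) + 1)).det =
      (∑ S ∈ (Finset.univ : Finset (Fin (η + l))).powersetCard η, ∏ j ∈ S, x j) *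
        (Matrix.vandermonde x).det := by
  have h := det_genVandermonde_aux (η + l) l (by omega) x
  rw [show η + l - l = η by omega] at h
  exact h
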